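/- For probability measures μ, ν on ℝ with finite first moments, the 1-Wasserstein distance equals the L¹ distance of the quantile functions: W₁(μ,ν) = ∫₀¹ |F_μ^{[-1]}(p) − F_ν^{[-1]}(p)| dp, where F^{[-1]}(p) = inf{x : p ≤ F(x)} is the generalized inverse of the CDF. -/

import Mathlib

open MeasureTheory Set ProbabilityTheory Filter Topology
open scoped ENNReal NNReal

set_option linter.unusedSectionVars false
set_option linter.unusedVariables false

noncomputable def W1 (μ ν : Measure ℝ) : ℝ :=
  ⨅ π : {π : Measure (ℝ × ℝ) // π.map Prod.fst = μ ∧ π.map Prod.snd = ν},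
    ∫ p, |p.1 - p.2| ∂(π.1)

/-- Generalized inverse (quantile function) of the CDF of `μ`. -/
noncomputable def quantile (μ : Measure ℝ) (p : ℝ) : ℝ :=
  sInf {x : ℝ | p ≤ (μ (Iic x)).toReal}

namespace W1aux

variable (μ : Measure ℝ) [IsProbabilityMeasure μ] {p : ℝ}

lemma quantile_def (p : ℝ) : quantile μ p = sInf {x | p ≤ cdf μ x} := by
  simp_rw [quantile, cdf_eq_real, measureReal_def]

lemma setNonempty (hp : p < 1) : {x | p ≤ cdf μ x}.Nonempty := by
  obtain ⟨x, hx⟩ := ((tendsto_cdf_atTop μ).eventually (lt_mem_nhds hp)).exists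
  exact ⟨x, hx.le⟩

lemma setBddBelow (hp : 0 < p) : BddBelow {x | p ≤ cdf μ x} := by
  obtain ⟨x₀, hx₀⟩ := ((tendsto_cdf_atBot μ).eventually (gt_mem_nhds hp)).exists
  refine ⟨x₀, fun y hy => ?_⟩
  by_contra h
  exact absurd (hy.trans (monotone_cdf μ (le_of_not_ge h))) (not_le.2 hx₀)

lemma le_cdf_quantile (hp : p ∈ Ioo (0:ℝ) 1) : p ≤ cdf μ (quantile μ p) := by
  rw [quantile_def]
  set S := {x | p ≤ cdf μ x}
  have hne := setNonempty μ hp.2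
  have hbdd := setBddBelow μ hp.1
  have key : ∀ ε > (0:ℝ), p ≤ cdf μ (sInf S + ε) := by
    intro ε hε
    obtain ⟨s, hs, hs'⟩ := exists_lt_of_csInf_lt hne (lt_add_of_pos_right (sInf S) hε)
    exact hs.trans (monotone_cdf μ hs'.le)
  have h1 : Tendsto (cdf μ) (𝓝[>] (sInf S)) (𝓝 (cdf μ (sInf S))) :=
    ((cdf μ).right_continuous (sInf S)).mono_left (nhdsWithin_mono _ Ioi_subset_Ici_self)
  refine ge_of_tendsto h1 ?_
  filter_upwards [self_mem_nhdsWithin] with y hy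
  have := key (y - sInf S) (sub_pos.2 hy)
  simpa using this

lemma quantile_le_iff (hp : p ∈ Ioo (0:ℝ) 1) {x : ℝ} :
    quantile μ p ≤ x ↔ p ≤ cdf μ x := by
  constructor
  · intro h
    exact (le_cdf_quantile μ hp).trans (monotone_cdf μ h)
  · intro h
    rw [quantile_def]
    exact csInf_le (setBddBelow μ hp.1) h

lemma quantile_monotoneOn : MonotoneOn (quantile μ) (Ioo (0:ℝ) 1) := by
  intro p hp q hq hpq
  rw [quantile_def, quantile_def]
  exact csInf_le_csInf (setBddBelow μ hp.1) (setNonempty μ hq.2)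
    (fun x hx => le_trans hpq hx)

lemma quantile_aemeasurable : AEMeasurable (quantile μ) (volume.restrict (Ioo (0:ℝ) 1)) :=
  aemeasurable_restrict_of_monotoneOn measurableSet_Ioo (quantile_monotoneOn μ)

lemma volume_between {a b : ℝ} (hab : a ≤ b) {s : Set ℝ} (h1 : Ioo a b ⊆ s)
    (h2 : s ⊆ Ioc a b) : volume s = ENNReal.ofReal (b - a) := by
  refine le_antisymm ?_ ?_
  · calc volume s ≤ volume (Ioc a b) := measure_mono h2
      _ = ENNReal.ofReal (b - a) := Real.volume_Ioc
  · calc ENNReal.ofReal (b - a) = volume (Ioo a b) := Real.volume_Ioo.symm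
      _ ≤ volume s := measure_mono h1

lemma map_quantile :
    (volume.restrict (Ioo (0:ℝ) 1)).map (quantile μ) = μ := by
  have ham := quantile_aemeasurable μ
  haveI : IsProbabilityMeasure ((volume.restrict (Ioo (0:ℝ) 1)).map (quantile μ)) := by
    constructor
    rw [Measure.map_apply_of_aemeasurable ham MeasurableSet.univ]
    simp [Real.volume_Ioo]
  refine Measure.ext_of_Iic _ _ (fun x => ?_)
  rw [Measure.map_apply_of_aemeasurable ham measurableSet_Iic,
    Measure.restrict_apply' measurableSet_Ioo]
  have hset : quantile μ ⁻¹' Iic x ∩ Ioo 0 1 = {p | p ≤ cdf μ x} ∩ Ioo 0 1 := by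
    ext p
    simp only [mem_inter_iff, mem_preimage, mem_Iic, mem_setOf_eq, and_congr_left_iff]
    intro hp
    exact quantile_le_iff μ hp
  rw [hset, ← ofReal_cdf μ x]
  have : volume ({p | p ≤ cdf μ x} ∩ Ioo 0 1) = ENNReal.ofReal (cdf μ x - 0) :=
    volume_between (cdf_nonneg μ x) ?_ ?_
  · simpa using this
  · intro q hq
    exact ⟨hq.2.le, hq.1, lt_of_lt_of_le hq.2 (cdf_le_one μ x)⟩
  · rintro q ⟨hq1, hq2, _⟩
    exact ⟨hq2, hq1⟩

end W1aux

section helpers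

lemma symmdiff_Ici (a b t : ℝ) :
    ((a ≤ t ∧ ¬ b ≤ t) ∨ (b ≤ t ∧ ¬ a ≤ t)) ↔ t ∈ Ico (min a b) (max a b) := by
  rcases le_total a b with hab | hab
  · simp only [min_eq_left hab, max_eq_right hab, mem_Ico]
    constructor
    · rintro (⟨h1, h2⟩ | ⟨h1, h2⟩)
      · exact ⟨h1, not_le.1 h2⟩
      · exact absurd (hab.trans h1) h2
    · rintro ⟨h1, h2⟩; exact Or.inl ⟨h1, not_le.2 h2⟩
  · simp only [min_eq_right hab, max_eq_left hab, mem_Ico]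
    constructor
    · rintro (⟨h1, h2⟩ | ⟨h1, h2⟩)
      · exact absurd (hab.trans h1) h2
      · exact ⟨h1, not_le.1 h2⟩
    · rintro ⟨h1, h2⟩; exact Or.inr ⟨h1, not_le.2 h2⟩

lemma symmdiff_Iic (a b p : ℝ) :
    ((p ≤ a ∧ ¬ p ≤ b) ∨ (p ≤ b ∧ ¬ p ≤ a)) ↔ p ∈ Ioc (min a b) (max a b) := by
  rcases le_total a b with hab | hab
  · simp only [min_eq_left hab, max_eq_right hab, mem_Ioc]
    constructor
    · rintro (⟨h1, h2⟩ | ⟨h1, h2⟩)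
      · exact absurd (h1.trans hab) h2
      · exact ⟨not_le.1 h2, h1⟩
    · rintro ⟨h1, h2⟩; exact Or.inr ⟨h2, not_le.2 h1⟩
  · simp only [min_eq_right hab, max_eq_left hab, mem_Ioc]
    constructor
    · rintro (⟨h1, h2⟩ | ⟨h1, h2⟩)
      · exact ⟨not_le.1 h2, h1⟩
      · exact absurd (h1.trans hab) h2
    · rintro ⟨h1, h2⟩; exact Or.inl ⟨h2, not_le.2 h1⟩

lemma volume_symmdiff_Ici (a b : ℝ) :
    volume {t : ℝ | (a ≤ t ∧ ¬ b ≤ t) ∨ (b ≤ t ∧ ¬ a ≤ t)} = ENNReal.ofReal |a - b| := by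
  have h : {t : ℝ | (a ≤ t ∧ ¬ b ≤ t) ∨ (b ≤ t ∧ ¬ a ≤ t)} = Ico (min a b) (max a b) := by
    ext t; exact symmdiff_Ici a b t
  rw [h, Real.volume_Ico, max_sub_min_eq_abs, abs_sub_comm]

end helpers

namespace W1aux

variable (μ ν : Measure ℝ) [IsProbabilityMeasure μ] [IsProbabilityMeasure ν]

lemma cdf_measurable : Measurable (cdf μ) := (monotone_cdf μ).measurable

lemma key_a :
    ∫⁻ p in Ioo (0:ℝ) 1, ENNReal.ofReal |quantile μ p - quantile ν p| =
    ∫⁻ t, ENNReal.ofReal |cdf μ t - cdf ν t| := by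
  set F := cdf μ with hFdef
  set G := cdf ν with hGdef
  set A : Set (ℝ × ℝ) :=
    {q | (q.2 ≤ F q.1 ∧ ¬ q.2 ≤ G q.1) ∨ (q.2 ≤ G q.1 ∧ ¬ q.2 ≤ F q.1)} with hAdef
  have h1 : MeasurableSet {q : ℝ × ℝ | q.2 ≤ F q.1} :=
    measurableSet_le measurable_snd ((cdf_measurable μ).comp measurable_fst)
  have h2 : MeasurableSet {q : ℝ × ℝ | q.2 ≤ G q.1} :=
    measurableSet_le measurable_snd ((cdf_measurable ν).comp measurable_fst)
  have hA : MeasurableSet A := by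
    have : A = ({q : ℝ × ℝ | q.2 ≤ F q.1} ∩ {q : ℝ × ℝ | q.2 ≤ G q.1}ᶜ) ∪
        ({q : ℝ × ℝ | q.2 ≤ G q.1} ∩ {q : ℝ × ℝ | q.2 ≤ F q.1}ᶜ) := by
      ext q; simp [hAdef, and_comm]
    rw [this]
    exact (h1.inter h2.compl).union (h2.inter h1.compl)
  have e1 : (volume.prod (volume.restrict (Ioo (0:ℝ) 1))) A
      = ∫⁻ t, ENNReal.ofReal |F t - G t| := by
    rw [Measure.prod_apply hA]
    refine lintegral_congr fun t => ?_
    have hsec : Prod.mk t ⁻¹' A = Ioc (min (F t) (G t)) (max (F t) (G t)) := by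
      ext p; exact symmdiff_Iic (F t) (G t) p
    rw [hsec, Measure.restrict_apply' measurableSet_Ioo]
    have hv : volume (Ioc (min (F t) (G t)) (max (F t) (G t)) ∩ Ioo 0 1)
        = ENNReal.ofReal (max (F t) (G t) - min (F t) (G t)) := by
      refine volume_between min_le_max ?_ ?_
      · intro p hp
        refine ⟨⟨hp.1, hp.2.le⟩, ?_, ?_⟩
        · exact lt_of_le_of_lt (le_min (cdf_nonneg μ t) (cdf_nonneg ν t)) hp.1
        · exact lt_of_lt_of_le hp.2 (max_le (cdf_le_one μ t) (cdf_le_one ν t))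
      · exact inter_subset_left
    rw [hv, max_sub_min_eq_abs, abs_sub_comm]
  have e2 : (volume.prod (volume.restrict (Ioo (0:ℝ) 1))) A
      = ∫⁻ p in Ioo (0:ℝ) 1, ENNReal.ofReal |quantile μ p - quantile ν p| := by
    rw [Measure.prod_apply_symm hA]
    refine setLIntegral_congr_fun_ae measurableSet_Ioo (ae_of_all _ fun p hp => ?_)
    have hsec : ((fun t => (t, p)) ⁻¹' A) =
        {t : ℝ | (quantile μ p ≤ t ∧ ¬ quantile ν p ≤ t) ∨
          (quantile ν p ≤ t ∧ ¬ quantile μ p ≤ t)} := by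
      ext t
      simp only [hAdef, mem_preimage, mem_setOf_eq]
      rw [← quantile_le_iff μ hp, ← quantile_le_iff ν hp]
    rw [hsec, volume_symmdiff_Ici]
  rw [← e2, e1]

end W1aux

namespace W1aux

variable (μ ν : Measure ℝ) [IsProbabilityMeasure μ] [IsProbabilityMeasure ν]

lemma coupling_ge (hμi : Integrable (fun x => x) μ) (hνi : Integrable (fun x => x) ν)
    (π : Measure (ℝ × ℝ)) (hπ1 : π.map Prod.fst = μ) (hπ2 : π.map Prod.snd = ν) :
    ∫ p in Ioo (0:ℝ) 1, |quantile μ p - quantile ν p| ≤ ∫ q, |q.1 - q.2| ∂π := by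
  haveI : IsProbabilityMeasure π := by
    constructor
    have h : π.map Prod.fst univ = 1 := by rw [hπ1]; exact measure_univ
    rwa [Measure.map_apply measurable_fst MeasurableSet.univ, preimage_univ] at h
  have hx : Integrable (fun q : ℝ × ℝ => q.1) π := by
    have h := hμi
    rw [← hπ1] at h
    exact (integrable_map_measure measurable_id.aestronglyMeasurable
      measurable_fst.aemeasurable).1 h
  have hy : Integrable (fun q : ℝ × ℝ => q.2) π := by
    have h := hνi
    rw [← hπ2] at h
    exact (integrable_map_measure measurable_id.aestronglyMeasurable
      measurable_snd.aemeasurable).1 h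
  have habs : Integrable (fun q : ℝ × ℝ => |q.1 - q.2|) π := (hx.sub hy).abs
  set B : Set ((ℝ × ℝ) × ℝ) :=
    {q | (q.1.1 ≤ q.2 ∧ ¬ q.1.2 ≤ q.2) ∨ (q.1.2 ≤ q.2 ∧ ¬ q.1.1 ≤ q.2)} with hBdef
  have hb1 : MeasurableSet {q : (ℝ × ℝ) × ℝ | q.1.1 ≤ q.2} :=
    measurableSet_le (measurable_fst.comp measurable_fst) measurable_snd
  have hb2 : MeasurableSet {q : (ℝ × ℝ) × ℝ | q.1.2 ≤ q.2} :=
    measurableSet_le (measurable_snd.comp measurable_fst) measurable_snd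
  have hB : MeasurableSet B := by
    have h : B = ({q : (ℝ × ℝ) × ℝ | q.1.1 ≤ q.2} ∩ {q : (ℝ × ℝ) × ℝ | q.1.2 ≤ q.2}ᶜ) ∪
        ({q : (ℝ × ℝ) × ℝ | q.1.2 ≤ q.2} ∩ {q : (ℝ × ℝ) × ℝ | q.1.1 ≤ q.2}ᶜ) := by
      ext q; simp [hBdef, and_comm]
    rw [h]
    exact (hb1.inter hb2.compl).union (hb2.inter hb1.compl)
  have eB1 : (π.prod volume) B = ∫⁻ q, ENNReal.ofReal |q.1 - q.2| ∂π := by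
    rw [Measure.prod_apply hB]
    refine lintegral_congr fun q => ?_
    have h : Prod.mk q ⁻¹' B =
        {t : ℝ | (q.1 ≤ t ∧ ¬ q.2 ≤ t) ∨ (q.2 ≤ t ∧ ¬ q.1 ≤ t)} := rfl
    rw [h, volume_symmdiff_Ici]
  have eB2 : ∫⁻ t, ENNReal.ofReal |cdf μ t - cdf ν t| ≤ (π.prod volume) B := by
    rw [Measure.prod_apply_symm hB]
    refine lintegral_mono fun t => ?_
    have hA1 : π {q : ℝ × ℝ | q.1 ≤ t} = ENNReal.ofReal (cdf μ t) := by
      rw [ofReal_cdf, ← hπ1, Measure.map_apply measurable_fst measurableSet_Iic]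
      rfl
    have hA2 : π {q : ℝ × ℝ | q.2 ≤ t} = ENNReal.ofReal (cdf ν t) := by
      rw [ofReal_cdf, ← hπ2, Measure.map_apply measurable_snd measurableSet_Iic]
      rfl
    have hsub1 : {q : ℝ × ℝ | q.1 ≤ t} \ {q : ℝ × ℝ | q.2 ≤ t} ⊆
        (fun q : ℝ × ℝ => (q, t)) ⁻¹' B := fun q hq => Or.inl ⟨hq.1, hq.2⟩
    have hsub2 : {q : ℝ × ℝ | q.2 ≤ t} \ {q : ℝ × ℝ | q.1 ≤ t} ⊆
        (fun q : ℝ × ℝ => (q, t)) ⁻¹' B := fun q hq => Or.inr ⟨hq.1, hq.2⟩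
    rcases le_total (cdf ν t) (cdf μ t) with hle | hle
    · rw [abs_of_nonneg (sub_nonneg.2 hle), ENNReal.ofReal_sub _ (cdf_nonneg ν t),
        ← hA1, ← hA2]
      exact le_trans le_measure_diff (measure_mono hsub1)
    · rw [abs_of_nonpos (sub_nonpos.2 hle), neg_sub, ENNReal.ofReal_sub _ (cdf_nonneg μ t),
        ← hA1, ← hA2]
      exact le_trans le_measure_diff (measure_mono hsub2)
  have hfin : ∫⁻ q, ENNReal.ofReal |q.1 - q.2| ∂π ≠ ⊤ := by
    have heq : ∫⁻ q, ENNReal.ofReal |q.1 - q.2| ∂π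
        = ∫⁻ (q : ℝ × ℝ), ‖q.1 - q.2‖ₑ ∂π :=
      lintegral_congr fun q => (Real.enorm_eq_ofReal_abs _).symm
    rw [heq]
    have h2 := habs.hasFiniteIntegral
    rw [HasFiniteIntegral] at h2
    simp only [Real.enorm_abs] at h2
    exact h2.ne
  have c1 : ∫ q, |q.1 - q.2| ∂π = (∫⁻ q, ENNReal.ofReal |q.1 - q.2| ∂π).toReal :=
    integral_eq_lintegral_of_nonneg_ae (ae_of_all _ fun q => abs_nonneg _)
      ((measurable_fst.sub measurable_snd).abs.aestronglyMeasurable)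
  have c2 : ∫ p in Ioo (0:ℝ) 1, |quantile μ p - quantile ν p|
      = (∫⁻ p in Ioo (0:ℝ) 1, ENNReal.ofReal |quantile μ p - quantile ν p|).toReal :=
    integral_eq_lintegral_of_nonneg_ae (ae_of_all _ fun p => abs_nonneg _)
      (by
        have h := ((quantile_aemeasurable μ).sub
          (quantile_aemeasurable ν)).aestronglyMeasurable.norm
        simpa [Real.norm_eq_abs] using h)
  rw [c1, c2]
  refine ENNReal.toReal_mono hfin ?_
  calc ∫⁻ p in Ioo (0:ℝ) 1, ENNReal.ofReal |quantile μ p - quantile ν p|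
      = ∫⁻ t, ENNReal.ofReal |cdf μ t - cdf ν t| := key_a μ ν
    _ ≤ (π.prod volume) B := eB2
    _ = ∫⁻ q, ENNReal.ofReal |q.1 - q.2| ∂π := eB1

end W1aux

theorem stmt3 (μ ν : Measure ℝ) [IsProbabilityMeasure μ] [IsProbabilityMeasure ν]
    (hμ : Integrable (fun x => x) μ) (hν : Integrable (fun x => x) ν) :
    W1 μ ν = ∫ p in Ioo (0:ℝ) 1, |quantile μ p - quantile ν p| := by
  have hamμ := W1aux.quantile_aemeasurable μ
  have hamν := W1aux.quantile_aemeasurable ν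
  have hpair : AEMeasurable (fun p => (quantile μ p, quantile ν p))
      (volume.restrict (Ioo (0:ℝ) 1)) := hamμ.prodMk hamν
  set π₀ := (volume.restrict (Ioo (0:ℝ) 1)).map (fun p => (quantile μ p, quantile ν p))
    with hπ₀def
  have h1 : π₀.map Prod.fst = μ := by
    rw [hπ₀def, AEMeasurable.map_map_of_aemeasurable measurable_fst.aemeasurable hpair]
    exact W1aux.map_quantile μ
  have h2 : π₀.map Prod.snd = ν := by
    rw [hπ₀def, AEMeasurable.map_map_of_aemeasurable measurable_snd.aemeasurable hpair]
    exact W1aux.map_quantile ν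
  have hval : ∫ q, |q.1 - q.2| ∂π₀ = ∫ p in Ioo (0:ℝ) 1, |quantile μ p - quantile ν p| := by
    rw [hπ₀def, integral_map (f := fun q : ℝ × ℝ => |q.1 - q.2|) hpair
      ((measurable_fst.sub measurable_snd).abs.aestronglyMeasurable)]
  haveI : Nonempty {π : Measure (ℝ × ℝ) // π.map Prod.fst = μ ∧ π.map Prod.snd = ν} :=
    ⟨⟨π₀, h1, h2⟩⟩
  refine le_antisymm ?_ ?_
  · have hbdd : BddBelow (Set.range fun π : {π : Measure (ℝ × ℝ) //
        π.map Prod.fst = μ ∧ π.map Prod.snd = ν} => ∫ q, |q.1 - q.2| ∂(π.1)) := by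
      refine ⟨0, ?_⟩
      rintro x ⟨π, rfl⟩
      exact integral_nonneg fun q => abs_nonneg _
    calc W1 μ ν ≤ ∫ q, |q.1 - q.2| ∂π₀ := ciInf_le hbdd ⟨π₀, h1, h2⟩
      _ = _ := hval
  · exact le_ciInf fun π => W1aux.coupling_ge μ ν hμ hν π.1 π.2.1 π.2.2
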